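/- For integers n and p with 1 ≤ p ≤ n−2, the normalised degree variance of the perfect quasi-star graph satisfies v̄(G*(n,p)) = 2(n−1)(n−p−1)/((2n−p−1)·n). -/

import Mathlib

/-- The perfect quasi-star graph `G*(n,p)`: the simple graph on vertex set `{0,…,n-1}`
(a copy of `{1,…,n}`) in which the first `p` vertices (the dominant vertices) are
adjacent to all other vertices and there are no other edges. -/
def quasiStar (n p : ℕ) : SimpleGraph (Fin n) where
  Adj i j := i ≠ j ∧ ((i : ℕ) < p ∨ (j : ℕ) < p)
  symm := ⟨fun _ _ h => ⟨h.1.symm, h.2.symm⟩⟩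
  loopless := ⟨fun _ h => h.1 rfl⟩

instance (n p : ℕ) : DecidableRel (quasiStar n p).Adj :=
  fun i j => inferInstanceAs (Decidable (i ≠ j ∧ ((i : ℕ) < p ∨ (j : ℕ) < p)))

/-- The degree variance of a finite simple graph `G` on `n` vertices with `m` edges:
`v(G) = (1/(n-1)) · ∑ i, (k_i - 2m/n)^2`. -/
noncomputable def degVar {n : ℕ} (G : SimpleGraph (Fin n)) [DecidableRel G.Adj] : ℝ :=
  (1 / ((n : ℝ) - 1)) *
    ∑ i, ((G.degree i : ℝ) - 2 * (G.edgeFinset.card : ℝ) / n) ^ 2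

/-- The normalised degree variance `v̄(G) = ((n-1)/(n·m·(1-d))) · v(G)`, where
`d = 2m/(n(n-1))` is the density. -/
noncomputable def normDegVar {n : ℕ} (G : SimpleGraph (Fin n)) [DecidableRel G.Adj] : ℝ :=
  ((n : ℝ) - 1) /
      ((n : ℝ) * (G.edgeFinset.card : ℝ) *
        (1 - 2 * (G.edgeFinset.card : ℝ) / ((n : ℝ) * ((n : ℝ) - 1)))) *
    degVar G

lemma quasiStar_degree (n p : ℕ) (hpn : p < n) (i : Fin n) :
    (quasiStar n p).degree i = if (i:ℕ) < p then n - 1 else p := by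
  rw [← SimpleGraph.card_neighborFinset_eq_degree]
  have hnb : (quasiStar n p).neighborFinset i = Finset.univ.filter ((quasiStar n p).Adj i) := by
    ext j; simp [SimpleGraph.mem_neighborFinset]
  split
  · next h =>
    have : Finset.univ.filter ((quasiStar n p).Adj i) = Finset.univ.erase i := by
      ext j
      simp only [Finset.mem_filter, Finset.mem_univ, true_and, Finset.mem_erase]; simp only [quasiStar]
      constructor
      · rintro ⟨h1, -⟩; exact ⟨Ne.symm h1, trivial⟩
      · rintro ⟨h1, -⟩; exact ⟨Ne.symm h1, Or.inl h⟩
    rw [hnb, this, Finset.card_erase_of_mem (Finset.mem_univ i), Finset.card_univ,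
      Fintype.card_fin]
  · next h =>
    have : Finset.univ.filter ((quasiStar n p).Adj i) = Finset.Iio (⟨p, hpn⟩ : Fin n) := by
      ext j
      simp only [Finset.mem_filter, Finset.mem_univ, true_and, Finset.mem_Iio]; simp only [quasiStar]
      constructor
      · rintro ⟨-, h1 | h2⟩
        · omega
        · exact h2
      · intro hj
        have hj' : (j:ℕ) < p := hj
        refine ⟨fun e => ?_, Or.inr hj'⟩
        rw [e] at h; omega
    rw [hnb, this, Fin.card_Iio]

lemma card_lt_filter (n p : ℕ) (hpn : p < n) :
    (Finset.univ.filter (fun i : Fin n => (i:ℕ) < p)).card = p := by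
  have : Finset.univ.filter (fun i : Fin n => (i:ℕ) < p) = Finset.Iio (⟨p, hpn⟩ : Fin n) := by
    ext j; simp [Fin.lt_def]
  rw [this, Fin.card_Iio]

lemma quasiStar_edges (n p : ℕ) (hpn : p < n) :
    2 * (quasiStar n p).edgeFinset.card = p * (n - 1) + (n - p) * p := by
  have h := SimpleGraph.sum_degrees_eq_twice_card_edges (quasiStar n p)
  have hsum : ∑ i, (quasiStar n p).degree i = p * (n - 1) + (n - p) * p := by
    have : ∀ i : Fin n, (quasiStar n p).degree i = if (i:ℕ) < p then n - 1 else p :=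
      quasiStar_degree n p hpn
    rw [Finset.sum_congr rfl (fun i _ => this i), Finset.sum_ite, Finset.sum_const,
      Finset.sum_const, Finset.filter_not, Finset.card_sdiff_of_subset (Finset.filter_subset _ _),
      card_lt_filter n p hpn, Finset.card_univ, Fintype.card_fin, smul_eq_mul, smul_eq_mul]
  omega

lemma key_algebra (N P : ℝ) (hP : 1 ≤ P) (hPN : P + 2 ≤ N) :
    (N - 1) / (N * (P * (2 * N - P - 1) / 2) *
        (1 - 2 * (P * (2 * N - P - 1) / 2) / (N * (N - 1)))) *
      ((1 / (N - 1)) *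
        (P * ((N - 1) - 2 * (P * (2 * N - P - 1) / 2) / N) ^ 2 +
          (N - P) * (P - 2 * (P * (2 * N - P - 1) / 2) / N) ^ 2))
      = 2 * (N - 1) * (N - P - 1) / ((2 * N - P - 1) * N) := by
  have hN0 : N ≠ 0 := by nlinarith
  have hN1 : N - 1 ≠ 0 := by nlinarith
  have hP0 : P ≠ 0 := by nlinarith
  have h2 : 2 * N - P - 1 ≠ 0 := by nlinarith
  have h3 : N - P ≠ 0 := by nlinarith
  have h4 : N - P - 1 ≠ 0 := by nlinarith
  have hd : 1 - 2 * (P * (2 * N - P - 1) / 2) / (N * (N - 1))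
      = (N - P) * (N - P - 1) / (N * (N - 1)) := by
    field_simp; ring
  rw [hd]
  field_simp
  ring

/-- **Closed form of the normalised degree variance of a perfect quasi-star graph.**
For integers `n` and `p` with `1 ≤ p ≤ n - 2`,
`v̄(G*(n,p)) = 2(n-1)(n-p-1)/((2n-p-1)·n)`. -/
theorem normDegVar_quasiStar (n p : ℕ) (hp1 : 1 ≤ p) (hp2 : p ≤ n - 2) :
    normDegVar (quasiStar n p)
      = 2 * ((n : ℝ) - 1) * ((n : ℝ) - (p : ℝ) - 1)
          / ((2 * (n : ℝ) - (p : ℝ) - 1) * (n : ℝ)) := by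
  have hn : p + 2 ≤ n := by omega
  have hpn : p < n := by omega
  have hM : ((quasiStar n p).edgeFinset.card : ℝ)
      = (p : ℝ) * (2 * (n : ℝ) - (p : ℝ) - 1) / 2 := by
    have h := quasiStar_edges n p hpn
    have h' : (2 * (quasiStar n p).edgeFinset.card : ℝ)
        = (p : ℝ) * ((n : ℝ) - 1) + ((n : ℝ) - (p : ℝ)) * (p : ℝ) := by
      have h2 : ((2 * (quasiStar n p).edgeFinset.card : ℕ) : ℝ)
          = ((p * (n - 1) + (n - p) * p : ℕ) : ℝ) := by exact_mod_cast congrArg (fun k : ℕ => (k : ℝ)) h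
      push_cast [Nat.cast_sub (by omega : 1 ≤ n), Nat.cast_sub (by omega : p ≤ n)] at h2
      linarith
    linarith
  set c : ℝ := 2 * ((quasiStar n p).edgeFinset.card : ℝ) / n with hc
  have hsum : ∑ i, (((quasiStar n p).degree i : ℝ) - c) ^ 2
      = (p : ℝ) * (((n : ℝ) - 1) - c) ^ 2 + ((n : ℝ) - (p : ℝ)) * ((p : ℝ) - c) ^ 2 := by
    have heach : ∀ i : Fin n, (((quasiStar n p).degree i : ℝ) - c) ^ 2
        = if (i : ℕ) < p then (((n : ℝ) - 1) - c) ^ 2 else ((p : ℝ) - c) ^ 2 := by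
      intro i
      rw [quasiStar_degree n p hpn i]
      split
      · push_cast [Nat.cast_sub (by omega : 1 ≤ n)]; ring
      · ring
    rw [Finset.sum_congr rfl (fun i _ => heach i), Finset.sum_ite, Finset.sum_const,
      Finset.sum_const, Finset.filter_not, Finset.card_sdiff_of_subset (Finset.filter_subset _ _),
      card_lt_filter n p hpn, Finset.card_univ, Fintype.card_fin, nsmul_eq_mul, nsmul_eq_mul,
      Nat.cast_sub (by omega : p ≤ n)]
  rw [normDegVar, degVar, ← hc, hsum, hc, hM]
  exact key_algebra (n : ℝ) (p : ℝ) (by exact_mod_cast hp1)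
    (by exact_mod_cast (by exact_mod_cast hn : ((p + 2 : ℕ) : ℝ) ≤ (n : ℝ)))
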